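/- For every natural number n, the integral of Q(r,s,t)^n over the unit cube [0,1]³ with respect to Lebesgue measure equals (1/((n+1)·((n+1)!)²)) · Σ_{k=0}^{n} ((n−k)!)²·(k!)². In other words, the n-th moment of the area ratio Q is μₙ = (Σ_{k=0}^{n} ((n−k)! · k!)²) / ((n+1)·((n+1)!)²). -/

import Mathlib

open MeasureTheory Nat

lemma prod_fact_aux (a : ℕ) : ∀ m : ℕ,
    (∏ j ∈ Finset.range m, ((a : ℂ) + 1 + j)) * (a ! : ℂ) = ((a + m)! : ℂ) := by
  intro m
  induction m with
  | zero => simp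
  | succ m ih =>
      rw [Finset.prod_range_succ, mul_right_comm, ih]
      have : a + (m + 1) = (a + m) + 1 := by ring
      rw [this, Nat.factorial_succ]
      push_cast
      ring

lemma beta_nat (a b : ℕ) :
    ∫ x in Set.Icc (0:ℝ) 1, x ^ a * (1 - x) ^ b = (a ! : ℝ) * b ! / (a + b + 1)! := by
  have hu : 0 < ((a : ℂ) + 1).re := by
    simp [Complex.add_re]
    positivity
  have key := Complex.betaIntegral_eval_nat_add_one_right hu b
  rw [Complex.betaIntegral] at key
  have h1 : ∀ x : ℝ, (x : ℂ) ^ ((a : ℂ) + 1 - 1) * ((1 : ℂ) - x) ^ (((b : ℕ) : ℂ) + 1 - 1)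
      = ((x ^ a * (1 - x) ^ b : ℝ) : ℂ) := by
    intro x
    rw [add_sub_cancel_right, add_sub_cancel_right, Complex.cpow_natCast, Complex.cpow_natCast]
    push_cast
    ring
  simp_rw [h1] at key
  rw [intervalIntegral.integral_ofReal] at key
  have hP := prod_fact_aux a (b + 1)
  have hab : a + (b + 1) = a + b + 1 := by ring
  rw [hab] at hP
  have hPne : (∏ j ∈ Finset.range (b + 1), ((a : ℂ) + 1 + j)) ≠ 0 := by
    intro h
    rw [h, zero_mul] at hP
    exact (Nat.cast_ne_zero.mpr (Nat.factorial_ne_zero _)) hP.symm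
  have hC : ((∫ x in (0:ℝ)..1, x ^ a * (1 - x) ^ b : ℝ) : ℂ)
      = (((a ! : ℝ) * b ! / (a + b + 1)! : ℝ) : ℂ) := by
    rw [key]
    push_cast
    rw [div_eq_div_iff hPne (by exact_mod_cast Nat.cast_ne_zero.mpr (Nat.factorial_ne_zero (a+b+1)))]
    push_cast at hP
    rw [← hP]
    ring
  have := Complex.ofReal_injective hC
  rw [MeasureTheory.integral_Icc_eq_integral_Ioc,
    ← intervalIntegral.integral_of_le (zero_le_one)]
  exact this

lemma sum_integral (m : ℕ) (c : ℕ → ℝ) (e1 e2 : ℕ → ℕ) :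
    ∫ t in Set.Icc (0:ℝ) 1, ∑ k ∈ Finset.range m, c k * (t ^ e1 k * (1 - t) ^ e2 k)
    = ∑ k ∈ Finset.range m, c k * ((e1 k)! * (e2 k)! / (e1 k + e2 k + 1)!) := by
  rw [MeasureTheory.integral_finset_sum]
  · refine Finset.sum_congr rfl fun k _ => ?_
    rw [MeasureTheory.integral_const_mul, beta_nat]
  · intro k _
    apply Continuous.integrableOn_Icc
    fun_prop

/-- The `n`-th moment of `Q(r,s,t) = r·s·t + (1 − r)·(1 − s)·(1 − t)` over the
unit cube `[0,1]³` is `μₙ = (Σ_{k=0}^{n} ((n−k)!·k!)²) / ((n+1)·((n+1)!)²)`. -/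
theorem nth_moment_Q (n : ℕ) :
    ∫ p in Set.Icc (0:ℝ) 1 ×ˢ Set.Icc (0:ℝ) 1 ×ˢ Set.Icc (0:ℝ) 1,
      (p.1 * p.2.1 * p.2.2 + (1 - p.1) * (1 - p.2.1) * (1 - p.2.2)) ^ n =
    (1 / ((n + 1) * ((n + 1)! : ℝ) ^ 2)) *
      ∑ k ∈ Finset.range (n + 1), ((n - k)! : ℝ) ^ 2 * ((k)! : ℝ) ^ 2 := by
  set I := Set.Icc (0:ℝ) 1 with hI
  set B : ℕ → ℝ := fun k => ((k)! : ℝ) * ((n - k)! : ℝ) / ((n + 1)! : ℝ) with hBdef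
  have hBval : ∀ k ∈ Finset.range (n + 1),
      ((k)! : ℝ) * ((n - k)! : ℝ) / (k + (n - k) + 1)! = B k := by
    intro k hk
    have hk' : k ≤ n := Nat.lt_succ_iff.mp (Finset.mem_range.mp hk)
    rw [Nat.add_sub_cancel' hk']
  have hcont : Continuous fun p : ℝ × ℝ × ℝ =>
      (p.1 * p.2.1 * p.2.2 + (1 - p.1) * (1 - p.2.1) * (1 - p.2.2)) ^ n := by fun_prop
  -- Fubini: split off the first coordinate
  have hfub1 : ∫ p in I ×ˢ I ×ˢ I,
      (p.1 * p.2.1 * p.2.2 + (1 - p.1) * (1 - p.2.1) * (1 - p.2.2)) ^ n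
      = ∫ x in I, ∫ q in I ×ˢ I,
          (x * q.1 * q.2 + (1 - x) * (1 - q.1) * (1 - q.2)) ^ n := by
    rw [MeasureTheory.Measure.volume_eq_prod]
    exact MeasureTheory.setIntegral_prod _
      (hcont.continuousOn.integrableOn_compact
        (isCompact_Icc.prod (isCompact_Icc.prod isCompact_Icc)))
  have hfub2 : ∀ x : ℝ, ∫ q in I ×ˢ I,
      (x * q.1 * q.2 + (1 - x) * (1 - q.1) * (1 - q.2)) ^ n
      = ∫ y in I, ∫ z in I, (x * y * z + (1 - x) * (1 - y) * (1 - z)) ^ n := by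
    intro x
    rw [MeasureTheory.Measure.volume_eq_prod]
    exact MeasureTheory.setIntegral_prod _
      ((Continuous.continuousOn (by fun_prop)).integrableOn_compact
        (isCompact_Icc.prod isCompact_Icc))
  -- innermost integral
  have hin : ∀ x y : ℝ, ∫ z in I, (x * y * z + (1 - x) * (1 - y) * (1 - z)) ^ n
      = ∑ k ∈ Finset.range (n + 1),
          ((n.choose k : ℝ) * B k * (y ^ k * (1 - y) ^ (n - k)))
            * (x ^ k * (1 - x) ^ (n - k)) := by
    intro x y
    have expand : ∀ z : ℝ, (x * y * z + (1 - x) * (1 - y) * (1 - z)) ^ n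
        = ∑ k ∈ Finset.range (n + 1),
            ((n.choose k : ℝ) * (x ^ k * (1 - x) ^ (n - k)) * (y ^ k * (1 - y) ^ (n - k)))
              * (z ^ k * (1 - z) ^ (n - k)) := by
      intro z
      rw [add_pow]
      refine Finset.sum_congr rfl fun k _ => ?_
      simp only [mul_pow]
      ring
    simp_rw [expand]
    rw [sum_integral]
    refine Finset.sum_congr rfl fun k hk => ?_
    rw [hBval k hk]
    ring
  have hmid : ∀ x : ℝ, ∫ y in I, ∫ z in I,
      (x * y * z + (1 - x) * (1 - y) * (1 - z)) ^ n
      = ∑ k ∈ Finset.range (n + 1),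
          ((n.choose k : ℝ) * B k * B k) * (x ^ k * (1 - x) ^ (n - k)) := by
    intro x
    have : ∀ y : ℝ, ∫ z in I, (x * y * z + (1 - x) * (1 - y) * (1 - z)) ^ n
        = ∑ k ∈ Finset.range (n + 1),
            ((n.choose k : ℝ) * B k * (x ^ k * (1 - x) ^ (n - k)))
              * (y ^ k * (1 - y) ^ (n - k)) := by
      intro y
      rw [hin x y]
      exact Finset.sum_congr rfl fun k _ => by ring
    simp_rw [this]
    rw [sum_integral]
    refine Finset.sum_congr rfl fun k hk => ?_
    rw [hBval k hk]
    ring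
  rw [hfub1]
  simp_rw [hfub2, hmid]
  rw [sum_integral, Finset.mul_sum]
  refine Finset.sum_congr rfl fun k hk => ?_
  rw [hBval k hk]
  have hk' : k ≤ n := Nat.lt_succ_iff.mp (Finset.mem_range.mp hk)
  have hchoose : ((n.choose k : ℝ)) * (k)! * ((n - k)!) = (n)! := by
    exact_mod_cast congrArg (Nat.cast : ℕ → ℝ)
      (Nat.choose_mul_factorial_mul_factorial hk')
  have hfs : ((n + 1)! : ℝ) = (n + 1) * (n)! := by
    exact_mod_cast congrArg (Nat.cast : ℕ → ℝ) (Nat.factorial_succ n)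
  have h1 : ((n)! : ℝ) ≠ 0 := Nat.cast_ne_zero.mpr (Nat.factorial_ne_zero n)
  have h2 : ((n + 1)! : ℝ) ≠ 0 := Nat.cast_ne_zero.mpr (Nat.factorial_ne_zero (n + 1))
  have h3 : ((n : ℝ) + 1) ≠ 0 := by positivity
  have e1 : ((n.choose k : ℝ) * B k * B k * B k : ℝ)
      = ((n.choose k : ℝ) * (k)! * ((n - k)!)) * (((k)! : ℝ) ^ 2 * ((n - k)! : ℝ) ^ 2)
          / ((n + 1)! : ℝ) ^ 3 := by
    rw [hBdef]
    ring
  rw [e1, hchoose, hfs]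
  field_simp
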